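/- Let σ : ℕ → ℚ satisfy σ 0 = 0, σ 1 = 1/2 and, for every n ≥ 2, σ n = (1/2)·Σ_{l=1}^{n-1} σ l · σ (n-l); let κ : ℕ → ℚ satisfy κ 0 = 1 and, for every n ≥ 1, κ n = Σ_{m=1}^{n} κ (n-m) · σ m. Then for every n ≥ 0, κ n = binomial(2n, n) / 4ⁿ (the coefficients of 1/√(1-x)). -/

import Mathlib

open Finset

private def cc (n : ℕ) : ℚ := (Nat.choose (2 * n) n : ℚ) / 4 ^ n

private def bb (n : ℕ) : ℚ := if n = 0 then 0 else cc n / (2 * n - 1)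

private lemma cc_zero : cc 0 = 1 := by simp [cc]

private lemma cc_ratio (n : ℕ) : (2*(n:ℚ)+2) * cc (n+1) = (2*(n:ℚ)+1) * cc n := by
  have h : ((n:ℚ) + 1) * (n + 1).centralBinom = 2 * (2 * n + 1) * n.centralBinom :=
    mod_cast Nat.succ_mul_centralBinom_succ n
  have e1 : ((n+1).centralBinom : ℚ) = (Nat.choose (2 * (n+1)) (n+1) : ℚ) := by
    simp [Nat.centralBinom]
  have e2 : ((n).centralBinom : ℚ) = (Nat.choose (2 * n) n : ℚ) := by
    simp [Nat.centralBinom]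
  rw [e1, e2] at h
  unfold cc
  rw [← mul_div_assoc, ← mul_div_assoc, div_eq_div_iff (by positivity) (by positivity)]
  rw [pow_succ]
  linear_combination (2 * (4:ℚ)^n) * h

private lemma bb_succ (n : ℕ) : bb (n+1) = cc (n+1) / (2*(n:ℚ)+1) := by
  simp only [bb, Nat.succ_ne_zero, if_false]
  push_cast
  ring_nf

-- telescoping step
private lemma step (k j : ℕ) :
    2*((k:ℚ)+1)*cc (k+1)*cc j - 2*(k:ℚ)*cc k*cc (j+1)
      = 2*((k:ℚ)+(j:ℚ)+1) * bb (j+1) * cc k := by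
  have rk := cc_ratio k
  have rj := cc_ratio j
  rw [bb_succ]
  have hk2 : (2*(k:ℚ)+2) ≠ 0 := by positivity
  have hj2 : (2*(j:ℚ)+2) ≠ 0 := by positivity
  have hj1 : (2*(j:ℚ)+1) ≠ 0 := by positivity
  have ek : cc (k+1) = (2*(k:ℚ)+1) * cc k / (2*(k:ℚ)+2) := by
    field_simp; linarith [rk]
  have ej : cc (j+1) = (2*(j:ℚ)+1) * cc j / (2*(j:ℚ)+2) := by
    field_simp; linarith [rj]
  rw [ek, ej]
  field_simp
  ring

-- key identity (B), range form
private lemma keyB (N : ℕ) :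
    ∑ k ∈ range (N+1), bb (N+1-k) * cc k = cc (N+1) := by
  have tel := Finset.sum_range_sub (fun k : ℕ => 2*(k:ℚ)*cc k*cc (N+1-k)) (N+1)
  have hsum : ∑ k ∈ range (N+1), 2*((N:ℚ)+1) * (bb (N+1-k) * cc k)
      = 2*((N:ℚ)+1)*cc (N+1) := by
    calc ∑ k ∈ range (N+1), 2*((N:ℚ)+1) * (bb (N+1-k) * cc k)
        = ∑ k ∈ range (N+1),
          (2*((k:ℚ)+1)*cc (k+1)*cc (N-k) - 2*(k:ℚ)*cc k*cc (N+1-k)) := by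
          apply Finset.sum_congr rfl
          intro k hk
          simp only [mem_range] at hk
          have e2 : N + 1 - k = (N-k)+1 := by omega
          have hN : (N:ℚ) = (k:ℚ) + ((N-k:ℕ):ℚ) := by
            have : N = k + (N - k) := by omega
            exact_mod_cast congrArg (Nat.cast : ℕ → ℚ) this
          rw [e2, hN]
          linear_combination (-1 : ℚ) * step k (N-k)
      _ = 2*((N:ℚ)+1)*cc (N+1) := by
          have t := Finset.sum_range_sub (fun k : ℕ => 2*(k:ℚ)*cc k*cc (N+1-k)) (N+1)
          push_cast at t
          rw [t]
          simp [cc_zero]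
  rw [← Finset.mul_sum] at hsum
  have hpos : (2*((N:ℚ)+1)) ≠ 0 := by positivity
  exact mul_left_cancel₀ hpos hsum

private lemma keyB_Icc (n : ℕ) (hn : 1 ≤ n) :
    ∑ m ∈ Icc 1 n, cc (n-m) * bb m = cc n := by
  obtain ⟨N, rfl⟩ : ∃ N, n = N + 1 := ⟨n - 1, by omega⟩
  have h := keyB N
  have hr := Finset.sum_range_reflect (fun k : ℕ => bb (N+1-k) * cc k) (N+1)
  rw [← hr] at h
  rw [show Icc 1 (N+1) = Ico 1 (N+2) from rfl, Finset.sum_Ico_eq_sum_range,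
    show N + 2 - 1 = N + 1 from rfl, ← h]
  apply Finset.sum_congr rfl
  intro i hi
  simp only [mem_range] at hi
  have e1 : N + 1 - (1 + i) = N - i := by omega
  have e2 : N + 1 - 1 - i = N - i := by omega
  have e3 : N + 1 - (N + 1 - 1 - i) = 1 + i := by omega
  rw [e1, e3, e2]
  ring

-- partial fraction per-term identity
private lemma stepA (a d : ℕ) :
    (2*((a:ℚ)+(d:ℚ)+2) - 2) * (bb (a+1) * bb (d+1))
      = bb (a+1) * cc (d+1) + cc (a+1) * bb (d+1) := by
  rw [bb_succ, bb_succ]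
  have ha : (2*(a:ℚ)+1) ≠ 0 := by positivity
  have hd : (2*(d:ℚ)+1) ≠ 0 := by positivity
  field_simp
  ring

-- identity (A)
private lemma keyA (n : ℕ) (hn : 2 ≤ n) :
    ∑ l ∈ Ico 1 n, bb l * bb (n-l) = 2 * bb n := by
  have hT : ∑ l ∈ Ico 1 n, bb l * cc (n-l) = cc n - bb n := by
    have h := keyB_Icc n (by omega)
    rw [show Icc 1 n = Ico 1 (n+1) from rfl,
      Finset.sum_Ico_succ_top (by omega : 1 ≤ n)] at h
    have hnn : cc (n - n) * bb n = bb n := by simp [cc_zero]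
    rw [hnn] at h
    have he : ∑ l ∈ Ico 1 n, bb l * cc (n-l) = ∑ l ∈ Ico 1 n, cc (n-l) * bb l := by
      apply Finset.sum_congr rfl; intros; ring
    rw [he]; linarith [h]
  have hT2 : ∑ l ∈ Ico 1 n, cc l * bb (n-l) = cc n - bb n := by
    rw [← hT, Finset.sum_Ico_eq_sum_range, Finset.sum_Ico_eq_sum_range]
    have hr := Finset.sum_range_reflect (fun i : ℕ => bb (1+i) * cc (n-(1+i))) (n-1)
    rw [← hr]
    apply Finset.sum_congr rfl
    intro i hi
    simp only [mem_range] at hi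
    have e1 : 1 + (n - 1 - 1 - i) = n - (1+i) := by omega
    have e2 : n - (1 + (n - 1 - 1 - i)) = 1 + i := by omega
    rw [e2, e1]
    ring
  have hmain : (2*(n:ℚ) - 2) * (∑ l ∈ Ico 1 n, bb l * bb (n-l))
      = 2 * (cc n - bb n) := by
    rw [Finset.mul_sum]
    have he : ∑ l ∈ Ico 1 n, (2*(n:ℚ) - 2) * (bb l * bb (n-l))
        = ∑ l ∈ Ico 1 n, (bb l * cc (n-l) + cc l * bb (n-l)) := by
      apply Finset.sum_congr rfl
      intro l hl
      simp only [mem_Ico] at hl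
      obtain ⟨a, rfl⟩ : ∃ a, l = a + 1 := ⟨l - 1, by omega⟩
      obtain ⟨d, hd⟩ : ∃ d, n - (a+1) = d + 1 := ⟨n - (a+1) - 1, by omega⟩
      have hn' : (n:ℚ) = (a:ℚ) + (d:ℚ) + 2 := by
        have : n = a + d + 2 := by omega
        exact_mod_cast congrArg (Nat.cast : ℕ → ℚ) this
      rw [hd, hn']
      exact stepA a d
    rw [he, Finset.sum_add_distrib, hT, hT2]
    ring
  have hbb : cc n = (2*(n:ℚ) - 1) * bb n := by
    obtain ⟨a, rfl⟩ : ∃ a, n = a + 1 := ⟨n - 1, by omega⟩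
    rw [bb_succ]
    have ha : (2*(a:ℚ)+1) ≠ 0 := by positivity
    push_cast
    field_simp
    ring
  have hne : (2*(n:ℚ) - 2) ≠ 0 := by
    have : (2:ℚ) ≤ (n:ℚ) := by exact_mod_cast hn
    nlinarith
  apply mul_left_cancel₀ hne
  rw [hmain, hbb]
  ring

theorem kappa_eq_central_binom (σ κ : ℕ → ℚ)
    (hσ0 : σ 0 = 0) (hσ1 : σ 1 = 1/2)
    (hσrec : ∀ n : ℕ, 2 ≤ n → σ n = (1/2) * ∑ l ∈ Finset.Ico 1 n, σ l * σ (n - l))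
    (hκ0 : κ 0 = 1)
    (hκrec : ∀ n : ℕ, 1 ≤ n → κ n = ∑ m ∈ Finset.Icc 1 n, κ (n - m) * σ m) :
    ∀ n : ℕ, κ n = (Nat.choose (2 * n) n : ℚ) / 4 ^ n := by
  have hσ : ∀ n : ℕ, σ n = bb n := by
    intro n
    induction n using Nat.strong_induction_on with
    | _ n ih =>
      match n, ih with
      | 0, _ => simp [hσ0, bb]
      | 1, _ => rw [hσ1, bb_succ]; norm_num [cc]
      | (m+2), ih =>
        rw [hσrec (m+2) (by omega)]
        have he : ∑ l ∈ Ico 1 (m+2), σ l * σ (m+2-l)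
            = ∑ l ∈ Ico 1 (m+2), bb l * bb (m+2-l) := by
          apply Finset.sum_congr rfl
          intro l hl
          simp only [mem_Ico] at hl
          rw [ih l (by omega), ih (m+2-l) (by omega)]
        rw [he, keyA (m+2) (by omega)]
        ring
  have hκ : ∀ n : ℕ, κ n = cc n := by
    intro n
    induction n using Nat.strong_induction_on with
    | _ n ih =>
      match n, ih with
      | 0, _ => rw [hκ0, cc_zero]
      | (m+1), ih =>
        rw [hκrec (m+1) (by omega)]
        have he : ∑ l ∈ Icc 1 (m+1), κ (m+1-l) * σ l
            = ∑ l ∈ Icc 1 (m+1), cc (m+1-l) * bb l := by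
          apply Finset.sum_congr rfl
          intro l hl
          simp only [mem_Icc] at hl
          rw [ih (m+1-l) (by omega), hσ l]
        rw [he, keyB_Icc (m+1) (by omega)]
  intro n
  rw [hκ n]; rfl
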